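/- arXiv:0811.1152 — 2 statements merged into one kernel-verified Lean document; each statement's English description precedes it below -/
import Mathlib

section
/- Let d ≥ 1 and N ∈ ℕ. There exist real constants C_{αβγ}, indexed by multi-indices α, β, γ ∈ ℕ^d with |β|+|γ| ≤ N and |α|+|β|+|γ| ≤ 2N, such that the following holds: for every smooth function a : ℝ^d → ℝ all of whose derivatives have at most polynomial growth, if one defines A₀u = a·u and A_M u = P²(A_{M−1}u) − A_{M−1}(P²u) for Schwartz functions u (where P²u = −Δu + |x|²u), then for every Schwartz function u, A_N u = Σ_{|β|+|γ|≤N, |α|+|β|+|γ|≤2N} C_{αβγ} (∂^α a)·x^β ∂^γ u. -/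
open MeasureTheory

/-- Partial derivative in direction `i`. -/
noncomputable def pd (d : ℕ) (i : Fin d) (u : (Fin d → ℝ) → ℝ) : (Fin d → ℝ) → ℝ :=
  fun x => fderiv ℝ u x (Pi.single i 1)

/-- Iterated partial derivative `∂^β`. -/
noncomputable def pdM (d : ℕ) (β : Fin d → ℕ) (u : (Fin d → ℝ) → ℝ) : (Fin d → ℝ) → ℝ :=
  (List.finRange d).foldr (fun i w => (pd d i)^[β i] w) u

/-- The harmonic oscillator `P²u = −Δu + |x|²u`, acting on functions. -/
noncomputable def PsqFun (d : ℕ) (u : (Fin d → ℝ) → ℝ) : (Fin d → ℝ) → ℝ :=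
  fun x => -(∑ i, pd d i (pd d i u) x) + (∑ i, (x i) ^ 2) * u x

/-- Iterated commutators `A₀u = a·u`, `A_M u = P²(A_{M-1}u) − A_{M-1}(P²u)`. -/
noncomputable def AseqFun (d : ℕ) (a : (Fin d → ℝ) → ℝ) :
    ℕ → ((Fin d → ℝ) → ℝ) → ((Fin d → ℝ) → ℝ)
  | 0 => fun u x => a x * u x
  | N + 1 => fun u x => PsqFun d (AseqFun d a N u) x - AseqFun d a N (PsqFun d u) x

section basics
variable {d : ℕ}
abbrev Sm (u : (Fin d → ℝ) → ℝ) : Prop := ContDiff ℝ (⊤ : ℕ∞) u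

theorem Sm.diff {u : (Fin d → ℝ) → ℝ} (h : Sm u) : Differentiable ℝ u :=
  h.differentiable (by simp)

theorem Sm.pd {u : (Fin d → ℝ) → ℝ} (h : Sm u) (i : Fin d) : Sm (pd d i u) := by
  have h2 : ContDiff ℝ (⊤ : ℕ∞) (fderiv ℝ u) := h.fderiv_right (by exact_mod_cast le_top)
  exact (ContinuousLinearMap.apply ℝ ℝ (Pi.single i 1)).contDiff.comp h2

theorem pd_add {f g : (Fin d → ℝ) → ℝ} (hf : Differentiable ℝ f) (hg : Differentiable ℝ g)
    (i : Fin d) (x : Fin d → ℝ) :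
    pd d i (fun y => f y + g y) x = pd d i f x + pd d i g x := by
  simp [pd, fderiv_fun_add (hf x) (hg x)]

theorem pd_neg {f : (Fin d → ℝ) → ℝ} (i : Fin d) (x : Fin d → ℝ) :
    pd d i (fun y => -f y) x = -pd d i f x := by
  simp [pd, fderiv_neg]

theorem pd_mul {f g : (Fin d → ℝ) → ℝ} (hf : Differentiable ℝ f) (hg : Differentiable ℝ g)
    (i : Fin d) (x : Fin d → ℝ) :
    pd d i (fun y => f y * g y) x = pd d i f x * g x + f x * pd d i g x := by
  simp [pd, fderiv_fun_mul (hf x) (hg x)]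
  ring

theorem pd_const_mul {f : (Fin d → ℝ) → ℝ} (hf : Differentiable ℝ f) (c : ℝ)
    (i : Fin d) (x : Fin d → ℝ) :
    pd d i (fun y => c * f y) x = c * pd d i f x := by
  simp [pd, fderiv_const_mul (hf x) c]

theorem pd_comm {u : (Fin d → ℝ) → ℝ} (h : Sm u) (i j : Fin d) (x : Fin d → ℝ) :
    pd d i (pd d j u) x = pd d j (pd d i u) x := by
  have h2 : ContDiff ℝ (⊤ : ℕ∞) (fderiv ℝ u) := h.fderiv_right (by exact_mod_cast le_top)
  have hsym : IsSymmSndFDerivAt ℝ u x :=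
    h.contDiffAt.isSymmSndFDerivAt (by rw [minSmoothness_of_isRCLikeNormedField]; exact WithTop.coe_le_coe.2 le_top)
  have hfd : ∀ v : Fin d → ℝ, ∀ w : Fin d → ℝ,
      fderiv ℝ (fun y => fderiv ℝ u y v) x w = fderiv ℝ (fderiv ℝ u) x w v := by
    intro v w
    rw [fderiv_clm_apply (h2.differentiable (by simp) x)
      (differentiableAt_const v)]
    simp
  show fderiv ℝ (fun y => fderiv ℝ u y (Pi.single j 1)) x (Pi.single i 1) = _
  rw [hfd, hsym, ← hfd]
  rfl

theorem pd_coord (i j : Fin d) (x : Fin d → ℝ) :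
    pd d i (fun y => y j) x = (Pi.single i 1 : Fin d → ℝ) j := by
  show (fderiv ℝ (ContinuousLinearMap.proj j : (Fin d → ℝ) →L[ℝ] ℝ) x) _ = _
  rw [ContinuousLinearMap.fderiv]
  rfl

theorem Sm.coord (j : Fin d) : Sm (fun y : Fin d → ℝ => y j) :=
  (ContinuousLinearMap.proj j : (Fin d → ℝ) →L[ℝ] ℝ).contDiff

theorem pd_mono (β : Fin d → ℕ) (i : Fin d) (x : Fin d → ℝ) :
    pd d i (fun y => ∏ j, y j ^ β j) x
      = (β i : ℝ) * ∏ j, x j ^ (Function.update β i (β i - 1) j) := by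
  have h : ∀ j : Fin d, HasFDerivAt (fun y : Fin d → ℝ => y j ^ β j)
      (((β j : ℝ) * x j ^ (β j - 1)) • (ContinuousLinearMap.proj j : (Fin d → ℝ) →L[ℝ] ℝ)) x := by
    intro j
    exact (hasDerivAt_pow (β j) (x j)).comp_hasFDerivAt x
      ((ContinuousLinearMap.proj j : (Fin d → ℝ) →L[ℝ] ℝ).hasFDerivAt)
  have H := HasFDerivAt.finset_prod (u := Finset.univ) (fun j _ => h j)
  have hfd : pd d i (fun y => ∏ j, y j ^ β j) x
      = ∑ j, (∏ k ∈ Finset.univ.erase j, x k ^ β k) *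
          ((β j : ℝ) * x j ^ (β j - 1) * (Pi.single i 1 : Fin d → ℝ) j) := by
    show (fderiv ℝ _ x) _ = _
    rw [H.fderiv]
    simp [ContinuousLinearMap.proj, mul_assoc]
  rw [hfd, Finset.sum_eq_single i]
  · rw [Pi.single_eq_same]
    have : (∏ j, x j ^ (Function.update β i (β i - 1) j))
        = x i ^ (β i - 1) * ∏ k ∈ Finset.univ.erase i, x k ^ β k := by
      rw [← Finset.mul_prod_erase Finset.univ _ (Finset.mem_univ i)]
      rw [Function.update_self]
      congr 1
      exact Finset.prod_congr rfl fun k hk =>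
        by rw [Function.update_of_ne (Finset.ne_of_mem_erase hk)]
    rw [this]; ring
  · intro j _ hj
    rw [Pi.single_eq_of_ne hj]
    ring
  · intro hi; exact absurd (Finset.mem_univ i) hi

theorem pd_sumsq (j : Fin d) (x : Fin d → ℝ) :
    pd d j (fun y => ∑ i, y i ^ 2) x = 2 * x j := by
  have h : ∀ i : Fin d, HasFDerivAt (fun y : Fin d → ℝ => y i ^ 2)
      (((2 : ℕ) * x i ^ 1) • (ContinuousLinearMap.proj i : (Fin d → ℝ) →L[ℝ] ℝ)) x := by
    intro i
    have := (hasDerivAt_pow 2 (x i)).comp_hasFDerivAt x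
      ((ContinuousLinearMap.proj i : (Fin d → ℝ) →L[ℝ] ℝ).hasFDerivAt)
    simpa [Function.comp_def] using this
  have H := HasFDerivAt.fun_sum (u := Finset.univ) (fun i _ => h i)
  show (fderiv ℝ _ x) _ = _
  rw [H.fderiv, ContinuousLinearMap.sum_apply, Finset.sum_eq_single j]
  · simp
  · intro i _ hij
    simp [ContinuousLinearMap.proj, Pi.single_eq_of_ne' hij.symm]
  · simp

theorem pd_finsum {f : Fin d → (Fin d → ℝ) → ℝ} (hf : ∀ i, Differentiable ℝ (f i))
    (j : Fin d) (x : Fin d → ℝ) :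
    pd d j (fun y => ∑ i, f i y) x = ∑ i, pd d j (f i) x := by
  show (fderiv ℝ _ x) _ = _
  rw [fderiv_fun_sum (fun i _ => (hf i x))]
  simp [pd]

theorem Sm.sumsq : Sm (fun y : Fin d → ℝ => ∑ i, y i ^ 2) :=
  ContDiff.sum fun i _ => (Sm.coord i).pow 2

theorem Sm.finsum {f : Fin d → (Fin d → ℝ) → ℝ} (hf : ∀ i, Sm (f i)) :
    Sm (fun y => ∑ i, f i y) :=
  ContDiff.sum fun i _ => hf i

theorem Sm.psq {u : (Fin d → ℝ) → ℝ} (h : Sm u) : Sm (PsqFun d u) := by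
  have : Sm (fun y => -(∑ i, _root_.pd d i (_root_.pd d i u) y)) :=
    (Sm.finsum fun i => (h.pd i).pd i).neg
  exact this.add (Sm.sumsq.mul h)

end basics

section psq
variable {d : ℕ}

theorem single_collapse (j : Fin d) (g : Fin d → ℝ) :
    ∑ i, (Pi.single i 1 : Fin d → ℝ) j * g i = g j := by
  rw [Finset.sum_eq_single j]
  · simp
  · intro i _ hij; rw [Pi.single_eq_of_ne (Ne.symm hij)]; ring
  · simp

theorem psq_coord_mul {v : (Fin d → ℝ) → ℝ} (hv : Sm v) (j : Fin d) (x : Fin d → ℝ) :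
    PsqFun d (fun y => y j * v y) x = x j * PsqFun d v x - 2 * pd d j v x := by
  have e1 : ∀ i, pd d i (fun y => y j * v y)
      = fun z => (Pi.single i 1 : Fin d → ℝ) j * v z + z j * pd d i v z := by
    intro i; funext z
    rw [pd_mul (Sm.coord j).diff hv.diff, pd_coord]
  have e2 : ∀ i, ∀ z, pd d i (pd d i (fun y => y j * v y)) z
      = 2 * (Pi.single i 1 : Fin d → ℝ) j * pd d i v z + z j * pd d i (pd d i v) z := by
    intro i z
    rw [e1 i, pd_add (hv.diff.const_mul _) (Sm.diff ((Sm.coord j).mul (hv.pd i))),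
      pd_const_mul hv.diff, pd_mul (Sm.coord j).diff (hv.pd i).diff, pd_coord]
    ring
  show -(∑ i, pd d i (pd d i fun y => y j * v y) x) + (∑ i, x i ^ 2) * (x j * v x) = _
  simp only [e2]
  rw [Finset.sum_add_distrib]
  have c1 : ∑ i, 2 * (Pi.single i 1 : Fin d → ℝ) j * pd d i v x = 2 * pd d j v x := by
    rw [← single_collapse j (fun i => pd d i v x)]
    · rw [Finset.mul_sum]; exact Finset.sum_congr rfl fun i _ => by ring
  rw [c1, ← Finset.mul_sum]
  show _ = x j * (-(∑ i, pd d i (pd d i v) x) + (∑ i, x i ^ 2) * v x) - 2 * pd d j v x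
  ring

theorem psq_pd {v : (Fin d → ℝ) → ℝ} (hv : Sm v) (j : Fin d) (x : Fin d → ℝ) :
    PsqFun d (pd d j v) x = pd d j (PsqFun d v) x - 2 * x j * v x := by
  have hpart1 : Sm (fun y => -(∑ i, pd d i (pd d i v) y)) :=
    (Sm.finsum fun i => (hv.pd i).pd i).neg
  have hpart2 : Sm (fun y => (∑ i, y i ^ 2) * v y) := Sm.sumsq.mul hv
  have e0 : PsqFun d v = fun y => (fun z => -(∑ i, pd d i (pd d i v) z)) y
      + (fun z => (∑ i, z i ^ 2) * v z) y := rfl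
  have e1 : pd d j (PsqFun d v) x
      = pd d j (fun y => -(∑ i, pd d i (pd d i v) y)) x
        + pd d j (fun y => (∑ i, y i ^ 2) * v y) x := by
    rw [e0, pd_add hpart1.diff hpart2.diff]
  have e2 : pd d j (fun y => -(∑ i, pd d i (pd d i v) y)) x
      = -(∑ i, pd d i (pd d i (pd d j v)) x) := by
    have : ∀ z, -(∑ i, pd d i (pd d i v) z) = -((fun w => ∑ i, pd d i (pd d i v) w) z) :=
      fun z => rfl
    rw [pd_neg (f := fun z => ∑ i, pd d i (pd d i v) z)]
    rw [pd_finsum (fun i => ((hv.pd i).pd i).diff)]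
    congr 1
    refine Finset.sum_congr rfl fun i _ => ?_
    rw [pd_comm (hv.pd i) j i x]
    have hin : pd d j (pd d i v) = pd d i (pd d j v) := funext fun z => pd_comm hv j i z
    rw [← hin]
  have e3 : pd d j (fun y => (∑ i, y i ^ 2) * v y) x
      = 2 * x j * v x + (∑ i, x i ^ 2) * pd d j v x := by
    rw [pd_mul Sm.sumsq.diff hv.diff, pd_sumsq]
  show -(∑ i, pd d i (pd d i (pd d j v)) x) + (∑ i, x i ^ 2) * pd d j v x = _
  rw [e1, e2, e3]; ring

theorem psq_mul {p v : (Fin d → ℝ) → ℝ} (hp : Sm p) (hv : Sm v) (x : Fin d → ℝ) :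
    PsqFun d (fun y => p y * v y) x = p x * PsqFun d v x
      - (∑ i, pd d i (pd d i p) x) * v x - 2 * ∑ i, pd d i p x * pd d i v x := by
  have e1 : ∀ i, pd d i (fun y => p y * v y)
      = fun z => pd d i p z * v z + p z * pd d i v z := by
    intro i; funext z; rw [pd_mul hp.diff hv.diff]
  have e2 : ∀ i, ∀ z, pd d i (pd d i (fun y => p y * v y)) z
      = pd d i (pd d i p) z * v z + 2 * (pd d i p z * pd d i v z)
        + p z * pd d i (pd d i v) z := by
    intro i z
    rw [e1 i, pd_add (Sm.diff ((hp.pd i).mul hv)) (Sm.diff (hp.mul (hv.pd i))),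
      pd_mul (hp.pd i).diff hv.diff, pd_mul hp.diff (hv.pd i).diff]
    ring
  show -(∑ i, pd d i (pd d i fun y => p y * v y) x) + (∑ i, x i ^ 2) * (p x * v x) = _
  simp only [e2]
  rw [Finset.sum_add_distrib, Finset.sum_add_distrib, ← Finset.mul_sum,
    ← Finset.sum_mul, ← Finset.mul_sum]
  show _ = p x * (-(∑ i, pd d i (pd d i v) x) + (∑ i, x i ^ 2) * v x) - _ - _
  ring

end psq

section words
variable {d : ℕ}

theorem Sm.sumList {α : Type*} (L : List α) (F : α → (Fin d → ℝ) → ℝ)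
    (h : ∀ t ∈ L, Sm (F t)) : Sm (fun y => (L.map (fun t => F t y)).sum) := by
  induction L with
  | nil => simpa using contDiff_const
  | cons a L ih =>
    simp only [List.map_cons, List.sum_cons]
    exact (h a (by simp)).add (ih fun t ht => h t (by simp [ht]))

theorem pd_sumList {α : Type*} (L : List α) (F : α → (Fin d → ℝ) → ℝ)
    (h : ∀ t ∈ L, Sm (F t)) (i : Fin d) (x : Fin d → ℝ) :
    pd d i (fun y => (L.map (fun t => F t y)).sum) x = (L.map (fun t => pd d i (F t) x)).sum := by
  induction L with
  | nil =>
    simp only [List.map_nil, List.sum_nil]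
    show (fderiv ℝ (fun _ => (0:ℝ)) x) _ = 0
    rw [fderiv_fun_const]; rfl
  | cons a L ih =>
    simp only [List.map_cons, List.sum_cons]
    rw [pd_add (Sm.diff (h a (by simp)))
        (Sm.diff (Sm.sumList L F (fun t ht => h t (by simp [ht])))),
      ih (fun t ht => h t (by simp [ht]))]

noncomputable def wact (d : ℕ) : List (Fin d ⊕ Fin d) → ((Fin d → ℝ) → ℝ) → ((Fin d → ℝ) → ℝ)
  | [], u => u
  | Sum.inl i :: w, u => fun x => x i * wact d w u x
  | Sum.inr i :: w, u => pd d i (wact d w u)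

theorem Sm.wact {u : (Fin d → ℝ) → ℝ} (h : Sm u) (w : List (Fin d ⊕ Fin d)) :
    Sm (wact d w u) := by
  induction w with
  | nil => exact h
  | cons l w ih =>
    cases l with
    | inl i => exact (Sm.coord i).mul ih
    | inr i => exact ih.pd i

def psqRep (d : ℕ) : List (Fin d ⊕ Fin d) → List (ℝ × List (Fin d ⊕ Fin d))
  | [] => []
  | Sum.inl i :: w => (psqRep d w).map (fun p => (p.1, Sum.inl i :: p.2)) ++ [(-2, Sum.inr i :: w)]
  | Sum.inr i :: w => (psqRep d w).map (fun p => (p.1, Sum.inr i :: p.2)) ++ [(-2, Sum.inl i :: w)]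

theorem psqRep_len (w : List (Fin d ⊕ Fin d)) :
    ∀ p ∈ psqRep d w, p.2.length = w.length := by
  induction w with
  | nil => simp [psqRep]
  | cons l w ih =>
    cases l with
    | inl i =>
      intro p hp
      simp only [psqRep, List.mem_append, List.mem_map, List.mem_singleton] at hp
      rcases hp with ⟨q, hq, rfl⟩ | rfl
      · simpa using ih q hq
      · simp
    | inr i =>
      intro p hp
      simp only [psqRep, List.mem_append, List.mem_map, List.mem_singleton] at hp
      rcases hp with ⟨q, hq, rfl⟩ | rfl
      · simpa using ih q hq
      · simp

theorem wact_cons_inl (i : Fin d) (w : List (Fin d ⊕ Fin d)) (u : (Fin d → ℝ) → ℝ) :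
    wact d (Sum.inl i :: w) u = fun x => x i * wact d w u x := rfl

theorem wact_cons_inr (i : Fin d) (w : List (Fin d ⊕ Fin d)) (u : (Fin d → ℝ) → ℝ) :
    wact d (Sum.inr i :: w) u = pd d i (wact d w u) := rfl

theorem psqRep_eval (w : List (Fin d ⊕ Fin d)) {v : (Fin d → ℝ) → ℝ} (hv : Sm v)
    (x : Fin d → ℝ) :
    PsqFun d (wact d w v) x = wact d w (PsqFun d v) x
      + ((psqRep d w).map (fun p => p.1 * wact d p.2 v x)).sum := by
  induction w generalizing x with
  | nil => simp [psqRep, wact]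
  | cons l w ih =>
    cases l with
    | inl i =>
      show PsqFun d (fun y => y i * wact d w v y) x = _
      rw [psq_coord_mul (hv.wact w) i x]
      have ihx := ih x
      rw [ihx]
      show _ = x i * wact d w (PsqFun d v) x + _
      simp only [psqRep, List.map_append, List.sum_append, List.map_map, List.map_cons,
        List.map_nil, List.sum_cons, List.sum_nil]
      have : x i * ((psqRep d w).map (fun p => p.1 * wact d p.2 v x)).sum
          = ((psqRep d w).map (fun p => p.1 * (x i * wact d p.2 v x))).sum := by
        rw [← List.sum_map_mul_left]
        exact congrArg List.sum (List.map_congr_left fun p _ => by ring)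
      show x i * (wact d w (PsqFun d v) x + _) - 2 * wact d (Sum.inr i :: w) v x = _
      rw [mul_add, this]
      rw [show (List.map ((fun p => p.1 * wact d p.2 v x) ∘
            fun p : ℝ × List (Fin d ⊕ Fin d) => (p.1, Sum.inl i :: p.2)) (psqRep d w))
          = List.map (fun t : ℝ × List (Fin d ⊕ Fin d) => t.1 * (x i * wact d t.2 v x))
            (psqRep d w) from List.map_congr_left fun p _ => rfl]
      simp only [wact_cons_inl, wact_cons_inr]
      ring
    | inr i =>
      show PsqFun d (pd d i (wact d w v)) x = _
      rw [psq_pd (hv.wact w) i x]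
      have hfeq : PsqFun d (wact d w v)
          = fun y => wact d w (PsqFun d v) y
              + (fun z => ((psqRep d w).map (fun p => p.1 * wact d p.2 v z)).sum) y :=
        funext fun y => ih y
      rw [hfeq]
      rw [pd_add (Sm.diff ((hv.psq).wact w))
        (Sm.diff (Sm.sumList (psqRep d w) (fun p => fun z => p.1 * wact d p.2 v z)
          (fun p _ => (contDiff_const).mul ((hv.wact p.2))))) i x]
      rw [pd_sumList (psqRep d w) (fun p => fun z => p.1 * wact d p.2 v z)
        (fun p _ => (contDiff_const).mul ((hv.wact p.2))) i x]
      have e : ∀ p : ℝ × List (Fin d ⊕ Fin d),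
          pd d i (fun z => p.1 * wact d p.2 v z) x = p.1 * wact d (Sum.inr i :: p.2) v x :=
        fun p => pd_const_mul (Sm.diff (hv.wact p.2)) p.1 i x
      simp only [e]
      simp only [psqRep, List.map_append, List.sum_append, List.map_map, List.map_cons,
        List.map_nil, List.sum_cons, List.sum_nil]
      rw [show (List.map ((fun p => p.1 * wact d p.2 v x) ∘
            fun p : ℝ × List (Fin d ⊕ Fin d) => (p.1, Sum.inr i :: p.2)) (psqRep d w))
          = List.map (fun t : ℝ × List (Fin d ⊕ Fin d) => t.1 * wact d (Sum.inr i :: t.2) v x)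
            (psqRep d w) from List.map_congr_left fun p _ => rfl]
      simp only [wact_cons_inl, wact_cons_inr]
      ring
end words

section pdl
variable {d : ℕ}

noncomputable def pdL (d : ℕ) (l : List (Fin d)) (u : (Fin d → ℝ) → ℝ) : (Fin d → ℝ) → ℝ :=
  l.foldr (pd d) u

theorem Sm.pdL {u : (Fin d → ℝ) → ℝ} (h : Sm u) (l : List (Fin d)) : Sm (pdL d l u) := by
  induction l with
  | nil => exact h
  | cons i l ih => exact ih.pd i

theorem pdL_perm {l l' : List (Fin d)} (hp : l.Perm l') {u : (Fin d → ℝ) → ℝ} (hu : Sm u) :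
    pdL d l u = pdL d l' u := by
  induction hp with
  | nil => rfl
  | cons i h ih => exact congrArg (pd d i) ih
  | swap i j l => exact funext fun x => pd_comm (hu.pdL l) j i x
  | trans h1 h2 ih1 ih2 => rw [ih1, ih2]

def canon (d : ℕ) (c : Fin d → ℕ) : List (Fin d) :=
  (List.finRange d).flatMap fun i => List.replicate (c i) i

theorem pdL_replicate (n : ℕ) (i : Fin d) (u : (Fin d → ℝ) → ℝ) :
    pdL d (List.replicate n i) u = (pd d i)^[n] u := by
  induction n with
  | zero => rfl
  | succ n ih =>
    show pd d i (pdL d (List.replicate n i) u) = _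
    rw [ih, Function.iterate_succ_apply']

theorem pdL_append (l1 l2 : List (Fin d)) (u : (Fin d → ℝ) → ℝ) :
    pdL d (l1 ++ l2) u = pdL d l1 (pdL d l2 u) := by
  simp [pdL, List.foldr_append]

theorem pdM_eq_pdL (β : Fin d → ℕ) (u : (Fin d → ℝ) → ℝ) :
    pdM d β u = pdL d (canon d β) u := by
  show (List.finRange d).foldr _ u = _
  unfold canon
  induction List.finRange d with
  | nil => rfl
  | cons i l ih =>
    show (pd d i)^[β i] (l.foldr _ u) = pdL d (List.replicate (β i) i ++ _) u
    rw [pdL_append, ih, pdL_replicate]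
    simp [List.flatMap]

theorem count_canon (c : Fin d → ℕ) (j : Fin d) : (canon d c).count j = c j := by
  unfold canon
  rw [List.count_flatMap]
  have : ∀ i : Fin d, (List.count j ∘ fun i => List.replicate (c i) i) i
      = if j = i then c i else 0 := by
    intro i
    simp only [Function.comp_apply, List.count_replicate]
    by_cases h : j = i
    · simp [h]
    · simp [h, Ne.symm h]
  rw [List.map_congr_left fun i _ => this i]
  rw [← Fin.sum_univ_def]
  simp

theorem perm_canon_count (l : List (Fin d)) : l.Perm (canon d fun i => l.count i) :=
  List.perm_iff_count.2 fun j => by rw [count_canon]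

theorem pdL_eq_pdM {u : (Fin d → ℝ) → ℝ} (hu : Sm u) (l : List (Fin d)) :
    pdL d l u = pdM d (fun i => l.count i) u := by
  rw [pdM_eq_pdL]
  exact pdL_perm (perm_canon_count l) hu

theorem length_eq_sum_count (l : List (Fin d)) : l.length = ∑ i, l.count i := by
  induction l with
  | nil => simp
  | cons a l ih =>
    have hc : ∀ i, (a::l).count i = l.count i + if i = a then 1 else 0 := by
      intro i
      by_cases h : i = a
      · simp [List.count_cons, h]
      · simp [List.count_cons, h, Ne.symm h]
    simp only [List.length_cons, hc]
    rw [Finset.sum_add_distrib, ← ih, Finset.sum_ite_eq' Finset.univ a (fun _ => 1)]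
    simp
end pdl

section helpers
variable {α : Type*} {ι : Type*}

theorem Lsum_add (l : List α) (f g : α → ℝ) :
    (l.map fun t => f t + g t).sum = (l.map f).sum + (l.map g).sum := by
  induction l with
  | nil => simp
  | cons a l ih => simp [ih]; ring

theorem Lsum_sub (l : List α) (f g : α → ℝ) :
    (l.map fun t => f t - g t).sum = (l.map f).sum - (l.map g).sum := by
  induction l with
  | nil => simp
  | cons a l ih => simp [ih]; ring

theorem Lsum_swap (s : Finset ι) (l : List α) (g : ι → α → ℝ) :
    ∑ i ∈ s, (l.map (g i)).sum = (l.map fun t => ∑ i ∈ s, g i t).sum := by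
  induction l with
  | nil => simp
  | cons a l ih => simp [Finset.sum_add_distrib, ih]

theorem Lsum_flat (l : List α) {β : Type*} (f : α → List β) (g : β → ℝ) :
    ((l.flatMap f).map g).sum = (l.map fun a => ((f a).map g).sum).sum := by
  induction l with
  | nil => simp
  | cons a l ih => simp [List.flatMap_cons, ih]

theorem Lsum_filter (l : List α) (p : α → Prop) [DecidablePred p] (f : α → ℝ) :
    ((l.filter p).map f).sum = (l.map fun t => if p t then f t else 0).sum := by
  induction l with
  | nil => simp
  | cons a l ih =>
    by_cases h : p a
    · simp [List.filter_cons, h, ih]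
    · simp [List.filter_cons, h, ih]

end helpers

section nf
variable {d : ℕ}

theorem mono_update_succ (β : Fin d → ℕ) (i : Fin d) (x : Fin d → ℝ) :
    (∏ j, x j ^ (Function.update β i (β i + 1) j)) = x i * ∏ j, x j ^ β j := by
  have h1 : ∀ j, x j ^ (Function.update β i (β i + 1) j)
      = Function.update (fun k => x k ^ β k) i (x i ^ (β i + 1)) j := by
    intro j
    by_cases h : j = i
    · subst h; simp
    · simp [Function.update_of_ne h]
  simp only [h1]
  rw [Finset.prod_update_of_mem (Finset.mem_univ i),
    ← Finset.mul_prod_erase Finset.univ (fun j => x j ^ β j) (Finset.mem_univ i), pow_succ, Finset.erase_eq]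
  ring

theorem update_eq_update (β : Fin d → ℕ) (i : Fin d) (m : ℕ) :
    ∀ j, Function.update β i m j = Function.update (fun k => β k) i m j := fun _ => rfl

theorem sum_update_succ (β : Fin d → ℕ) (i : Fin d) :
    (∑ j, Function.update β i (β i + 1) j) = (∑ j, β j) + 1 := by
  rw [Finset.sum_update_of_mem (Finset.mem_univ i),
    ← Finset.add_sum_erase Finset.univ β (Finset.mem_univ i)]
  simp only [Finset.erase_eq]
  omega

theorem sum_update_pred (β : Fin d → ℕ) (i : Fin d) :
    (∑ j, Function.update β i (β i - 1) j) ≤ ∑ j, β j := by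
  rw [Finset.sum_update_of_mem (Finset.mem_univ i)]
  conv_rhs => rw [← Finset.add_sum_erase Finset.univ β (Finset.mem_univ i)]
  simp only [Finset.erase_eq]
  omega

theorem Sm.mono (β : Fin d → ℕ) : Sm (fun y : Fin d → ℝ => ∏ j, y j ^ β j) :=
  contDiff_prod fun j _ => (Sm.coord j).pow (β j)

def nf (d : ℕ) : List (Fin d ⊕ Fin d) → List (ℝ × (Fin d → ℕ) × List (Fin d))
  | [] => [(1, fun _ => 0, [])]
  | Sum.inl i :: w => (nf d w).map fun q => (q.1, Function.update q.2.1 i (q.2.1 i + 1), q.2.2)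
  | Sum.inr i :: w => (nf d w).flatMap fun q =>
      [(q.1 * q.2.1 i, Function.update q.2.1 i (q.2.1 i - 1), q.2.2), (q.1, q.2.1, i :: q.2.2)]

theorem nf_deg (w : List (Fin d ⊕ Fin d)) :
    ∀ q ∈ nf d w, (∑ i, q.2.1 i) + q.2.2.length ≤ w.length := by
  induction w with
  | nil => simp [nf]
  | cons l w ih =>
    cases l with
    | inl i =>
      intro q hq
      simp only [nf, List.mem_map] at hq
      obtain ⟨r, hr, rfl⟩ := hq
      have := ih r hr
      simp only [List.length_cons, sum_update_succ]
      omega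
    | inr i =>
      intro q hq
      simp only [nf, List.mem_flatMap, List.mem_cons, List.mem_singleton] at hq
      obtain ⟨r, hr, hq⟩ := hq
      have := ih r hr
      have h2 := sum_update_pred r.2.1 i
      rcases hq with rfl | rfl | h
      · simp only [List.length_cons]
        omega
      · simp only [List.length_cons]
        omega
      · exact absurd h (by simp)

theorem nf_eval (w : List (Fin d ⊕ Fin d)) {u : (Fin d → ℝ) → ℝ} (hu : Sm u) (x : Fin d → ℝ) :
    wact d w u x
      = ((nf d w).map fun q => q.1 * ((∏ j, x j ^ q.2.1 j) * pdL d q.2.2 u x)).sum := by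
  induction w generalizing x with
  | nil => simp [nf, wact, pdL]
  | cons l w ih =>
    cases l with
    | inl i =>
      show x i * wact d w u x = _
      rw [ih x, ← List.sum_map_mul_left]
      simp only [nf, List.map_map]
      refine congrArg List.sum (List.map_congr_left fun q _ => ?_)
      simp only [Function.comp_apply]
      rw [mono_update_succ]
      ring
    | inr i =>
      show pd d i (wact d w u) x = _
      have hfeq : wact d w u
          = fun y => ((nf d w).map fun q => q.1 * ((∏ j, y j ^ q.2.1 j) * pdL d q.2.2 u y)).sum :=
        funext fun y => ih y
      rw [hfeq, pd_sumList (nf d w)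
        (fun q => fun y => q.1 * ((∏ j, y j ^ q.2.1 j) * pdL d q.2.2 u y))
        (fun q _ => contDiff_const.mul ((Sm.mono q.2.1).mul (hu.pdL q.2.2))) i x]
      simp only [nf]
      rw [Lsum_flat]
      refine congrArg List.sum (List.map_congr_left fun q _ => ?_)
      rw [pd_const_mul (Sm.diff ((Sm.mono q.2.1).mul (hu.pdL q.2.2))) q.1 i x,
        pd_mul (Sm.diff (Sm.mono q.2.1)) (Sm.diff (hu.pdL q.2.2)) i x,
        pd_mono q.2.1 i x]
      simp only [List.map_cons, List.map_nil, List.sum_cons, List.sum_nil]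
      show _ = q.1 * q.2.1 i * (_ * pdL d q.2.2 u x) + (q.1 * (_ * pd d i (pdL d q.2.2 u) x) + 0)
      ring
end nf

section main
variable {d : ℕ}

theorem Lsum_neg {α : Type*} (l : List α) (f : α → ℝ) :
    (l.map fun t => -(f t)).sum = -(l.map f).sum := by
  induction l with
  | nil => simp
  | cons a l ih => simp [ih]; ring

theorem psq_const_mul {v : (Fin d → ℝ) → ℝ} (hv : Sm v) (c : ℝ) (x : Fin d → ℝ) :
    PsqFun d (fun y => c * v y) x = c * PsqFun d v x := by
  have e1 : ∀ i, pd d i (fun y => c * v y) = fun z => c * pd d i v z :=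
    fun i => funext fun z => pd_const_mul hv.diff c i z
  have e2 : ∀ i, pd d i (pd d i (fun y => c * v y)) x = c * pd d i (pd d i v) x := by
    intro i
    rw [e1 i, pd_const_mul (Sm.diff (hv.pd i)) c i x]
  show -(∑ i, pd d i (pd d i fun y => c * v y) x) + (∑ i, x i ^ 2) * (c * v x) = _
  simp only [e2]
  rw [← Finset.mul_sum]
  show _ = c * (-(∑ i, pd d i (pd d i v) x) + (∑ i, x i ^ 2) * v x)
  ring

theorem psq_sumList {α : Type*} (L : List α) (F : α → (Fin d → ℝ) → ℝ)
    (h : ∀ t ∈ L, Sm (F t)) (x : Fin d → ℝ) :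
    PsqFun d (fun y => (L.map (fun t => F t y)).sum) x
      = (L.map fun t => PsqFun d (F t) x).sum := by
  have e1 : ∀ i, pd d i (fun y => (L.map (fun t => F t y)).sum)
      = fun z => (L.map (fun t => pd d i (F t) z)).sum :=
    fun i => funext fun z => pd_sumList L F h i z
  have e2 : ∀ i, pd d i (pd d i (fun y => (L.map (fun t => F t y)).sum)) x
      = (L.map (fun t => pd d i (pd d i (F t)) x)).sum := by
    intro i
    rw [e1 i, pd_sumList L (fun t => pd d i (F t)) (fun t ht => (h t ht).pd i) i x]
  show -(∑ i, pd d i (pd d i fun y => (L.map (fun t => F t y)).sum) x)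
      + (∑ i, x i ^ 2) * (L.map (fun t => F t x)).sum = _
  simp only [e2]
  rw [Lsum_swap, ← List.sum_map_mul_left, ← Lsum_neg, ← Lsum_add]
  rfl

theorem main_rep (d N : ℕ) :
    ∃ L : List (ℝ × (List (Fin d) × List (Fin d ⊕ Fin d))),
      (∀ p ∈ L, p.2.2.length ≤ N ∧ p.2.1.length + p.2.2.length ≤ 2 * N) ∧
      ∀ a u : (Fin d → ℝ) → ℝ, Sm a → Sm u → ∀ x,
        AseqFun d a N u x
          = (L.map (fun p => p.1 * (pdL d p.2.1 a x * wact d p.2.2 u x))).sum := by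
  induction N with
  | zero =>
    refine ⟨[(1, ([], []))], by simp, ?_⟩
    intro a u ha hu x
    show a x * u x = 1 * (pdL d [] a x * wact d [] u x) + 0
    show a x * u x = 1 * (a x * u x) + 0
    ring
  | succ N ih =>
    obtain ⟨L, hb, he⟩ := ih
    refine ⟨L.flatMap (fun p =>
      ((psqRep d p.2.2).map fun q => (p.1 * q.1, (p.2.1, q.2)))
      ++ ((List.finRange d).map fun i => (-p.1, (i :: i :: p.2.1, p.2.2)))
      ++ ((List.finRange d).map fun i => (-2 * p.1, (i :: p.2.1, Sum.inr i :: p.2.2)))),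
      ?_, ?_⟩
    · intro p' hp'
      rw [List.mem_flatMap] at hp'
      obtain ⟨p, hp, hmem⟩ := hp'
      have hbp := hb p hp
      rw [List.mem_append, List.mem_append] at hmem
      rcases hmem with (h1 | h2) | h3
      · rw [List.mem_map] at h1
        obtain ⟨q, hq, rfl⟩ := h1
        have := psqRep_len p.2.2 q hq
        simp only []
        omega
      · rw [List.mem_map] at h2
        obtain ⟨i, _, rfl⟩ := h2
        simp only [List.length_cons]
        omega
      · rw [List.mem_map] at h3
        obtain ⟨i, _, rfl⟩ := h3
        simp only [List.length_cons]
        omega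
    · intro a u ha hu x
      have hSmF : ∀ p ∈ L, Sm (fun y => p.1 * (pdL d p.2.1 a y * wact d p.2.2 u y)) :=
        fun p _ => contDiff_const.mul ((ha.pdL p.2.1).mul (hu.wact p.2.2))
      have hA : AseqFun d a N u
          = fun y => (L.map (fun p => p.1 * (pdL d p.2.1 a y * wact d p.2.2 u y))).sum :=
        funext fun y => he a u ha hu y
      show PsqFun d (AseqFun d a N u) x - AseqFun d a N (PsqFun d u) x = _
      rw [hA, psq_sumList L _ hSmF x, he a (PsqFun d u) ha hu.psq x, ← Lsum_sub]
      rw [Lsum_flat]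
      refine congrArg List.sum (List.map_congr_left fun p _ => ?_)
      -- per-term identity
      have hP : Sm (pdL d p.2.1 a) := ha.pdL p.2.1
      have hW : Sm (wact d p.2.2 u) := hu.wact p.2.2
      rw [psq_const_mul ((ha.pdL p.2.1).mul (hu.wact p.2.2)) p.1 x]
      rw [psq_mul hP hW x, psqRep_eval p.2.2 hu x]
      rw [List.map_append, List.map_append, List.sum_append, List.sum_append,
        List.map_map, List.map_map, List.map_map]
      have eA : ((psqRep d p.2.2).map ((fun p' => p'.1 * (pdL d p'.2.1 a x * wact d p'.2.2 u x))
            ∘ fun q => (p.1 * q.1, (p.2.1, q.2)))).sum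
          = p.1 * (pdL d p.2.1 a x
              * ((psqRep d p.2.2).map fun q => q.1 * wact d q.2 u x).sum) := by
        rw [← List.sum_map_mul_left, ← List.sum_map_mul_left]
        exact congrArg List.sum (List.map_congr_left fun q _ => by
          show (p.1 * q.1) * (pdL d p.2.1 a x * wact d q.2 u x)
            = p.1 * (pdL d p.2.1 a x * (q.1 * wact d q.2 u x))
          ring)
      have eB : ((List.finRange d).map ((fun p' => p'.1 * (pdL d p'.2.1 a x * wact d p'.2.2 u x))
            ∘ fun i => (-p.1, (i :: i :: p.2.1, p.2.2)))).sum
          = -(p.1 * ((∑ i, pd d i (pd d i (pdL d p.2.1 a)) x) * wact d p.2.2 u x)) := by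
        rw [Fin.sum_univ_def, ← List.sum_map_mul_right, ← List.sum_map_mul_left, ← Lsum_neg]
        exact congrArg List.sum (List.map_congr_left fun i _ => by
          show -p.1 * (pdL d (i :: i :: p.2.1) a x * wact d p.2.2 u x)
            = -(p.1 * (pd d i (pd d i (pdL d p.2.1 a)) x * wact d p.2.2 u x))
          show -p.1 * (pd d i (pd d i (pdL d p.2.1 a)) x * wact d p.2.2 u x)
            = -(p.1 * (pd d i (pd d i (pdL d p.2.1 a)) x * wact d p.2.2 u x))
          ring)
      have eC : ((List.finRange d).map ((fun p' => p'.1 * (pdL d p'.2.1 a x * wact d p'.2.2 u x))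
            ∘ fun i => (-2 * p.1, (i :: p.2.1, Sum.inr i :: p.2.2)))).sum
          = -(2 * p.1 * (∑ i, pd d i (pdL d p.2.1 a) x * pd d i (wact d p.2.2 u) x)) := by
        rw [Fin.sum_univ_def, ← List.sum_map_mul_left, ← Lsum_neg]
        exact congrArg List.sum (List.map_congr_left fun i _ => by
          show -2 * p.1 * (pdL d (i :: p.2.1) a x * wact d (Sum.inr i :: p.2.2) u x)
            = -(2 * p.1 * (pd d i (pdL d p.2.1 a) x * pd d i (wact d p.2.2 u) x))
          show -2 * p.1 * (pd d i (pdL d p.2.1 a) x * pd d i (wact d p.2.2 u) x)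
            = -(2 * p.1 * (pd d i (pdL d p.2.1 a) x * pd d i (wact d p.2.2 u) x))
          ring)
      rw [eA, eB, eC]
      ring
end main

section final
variable {d : ℕ}

theorem final_rep (d N : ℕ) :
    ∃ FL : List (ℝ × ((Fin d → ℕ) × (Fin d → ℕ) × (Fin d → ℕ))),
      (∀ r ∈ FL, ((∑ i, r.2.2.1 i) + (∑ i, r.2.2.2 i) ≤ N) ∧
        (∑ i, r.2.1 i) + (∑ i, r.2.2.1 i) + (∑ i, r.2.2.2 i) ≤ 2 * N) ∧
      ∀ a u : (Fin d → ℝ) → ℝ, Sm a → Sm u → ∀ x,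
        AseqFun d a N u x = (FL.map fun r => r.1
          * (pdM d r.2.1 a x * ((∏ j, x j ^ r.2.2.1 j) * pdM d r.2.2.2 u x))).sum := by
  obtain ⟨L, hb, he⟩ := main_rep d N
  refine ⟨L.flatMap fun p => (nf d p.2.2).map fun q =>
    (p.1 * q.1, ((fun i => p.2.1.count i), q.2.1, (fun i => q.2.2.count i))), ?_, ?_⟩
  · intro r hr
    rw [List.mem_flatMap] at hr
    obtain ⟨p, hp, hr⟩ := hr
    rw [List.mem_map] at hr
    obtain ⟨q, hq, rfl⟩ := hr
    have h1 := hb p hp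
    have h2 := nf_deg p.2.2 q hq
    have h3 := length_eq_sum_count p.2.1
    have h4 := length_eq_sum_count q.2.2
    constructor
    · simp only []
      omega
    · simp only []
      omega
  · intro a u ha hu x
    rw [he a u ha hu x, Lsum_flat]
    refine congrArg List.sum (List.map_congr_left fun p _ => ?_)
    rw [nf_eval p.2.2 hu x, ← List.sum_map_mul_left, ← List.sum_map_mul_left, List.map_map]
    refine congrArg List.sum (List.map_congr_left fun q _ => ?_)
    show p.1 * (pdL d p.2.1 a x * (q.1 * ((∏ j, x j ^ q.2.1 j) * pdL d q.2.2 u x)))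
      = (p.1 * q.1) * (pdM d (fun i => p.2.1.count i) a x
        * ((∏ j, x j ^ q.2.1 j) * pdM d (fun i => q.2.2.count i) u x))
    rw [pdL_eq_pdM ha, pdL_eq_pdM hu]
    ring

theorem group_sum {ι κ : Type*} [Fintype κ] [DecidableEq κ] [DecidableEq ι] (FL : List (ℝ × ι)) (V : ι → ℝ)
    (emb : κ → ι) (hinj : Function.Injective emb) (cond : κ → Prop) [DecidablePred cond]
    (hsurj : ∀ r ∈ FL, ∃ t, emb t = r.2 ∧ cond t) :
    (FL.map fun r => r.1 * V r.2).sum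
      = ∑ t : κ, if cond t then ((FL.filter fun r => r.2 = emb t).map (·.1)).sum * V (emb t)
          else 0 := by
  induction FL with
  | nil => simp
  | cons r FL ih =>
    obtain ⟨t₀, ht₀, hc₀⟩ := hsurj r (by simp)
    have hrest := ih fun r' hr' => hsurj r' (by simp [hr'])
    simp only [List.map_cons, List.sum_cons]
    rw [hrest]
    have key : ∀ t : κ,
        (if cond t then ((((r :: FL).filter fun r' => r'.2 = emb t)).map (·.1)).sum * V (emb t)
          else 0)
        = (if cond t then (((FL.filter fun r' => r'.2 = emb t)).map (·.1)).sum * V (emb t)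
            else 0)
          + (if t = t₀ then r.1 * V r.2 else 0) := by
      intro t
      by_cases hct : cond t
      · rw [if_pos hct, if_pos hct]
        by_cases hrt : r.2 = emb t
        · have ht : t = t₀ := (hinj (ht₀.trans hrt)).symm
          rw [List.filter_cons_of_pos (by simp [hrt]), if_pos ht]
          simp only [List.map_cons, List.sum_cons]
          rw [← hrt]
          ring
        · have hnt : ¬ t = t₀ := by
            intro h; subst h; exact hrt ht₀.symm
          rw [List.filter_cons_of_neg (by simp [hrt]), if_neg hnt, add_zero]
      · rw [if_neg hct, if_neg hct]
        have hnt : ¬ t = t₀ := by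
          intro h; subst h; exact hct hc₀
        rw [if_neg hnt, add_zero]
    rw [Finset.sum_congr rfl fun t _ => key t, Finset.sum_add_distrib]
    rw [Finset.sum_ite_eq' Finset.univ t₀ (fun _ => r.1 * V r.2)]
    simp
    ring
end final


/-- The `N`-th iterated commutator of the harmonic oscillator with multiplication by
`a` is a combination `Σ C_{αβγ} (∂^α a) x^β ∂^γ` over `|β|+|γ| ≤ N`,
`|α|+|β|+|γ| ≤ 2N`, with universal constants `C_{αβγ}`. -/
theorem commutator_expansion (d : ℕ) (hd : 1 ≤ d) (N : ℕ) :
    ∃ C : (Fin d → ℕ) → (Fin d → ℕ) → (Fin d → ℕ) → ℝ,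
      ∀ a : (Fin d → ℝ) → ℝ, Function.HasTemperateGrowth a →
        ∀ u : SchwartzMap (Fin d → ℝ) ℝ, ∀ x : Fin d → ℝ,
          AseqFun d a N (⇑u) x =
            ∑ t : (Fin d → Fin (2 * N + 1)) × (Fin d → Fin (2 * N + 1)) ×
                (Fin d → Fin (2 * N + 1)),
              if (∑ i, (t.2.1 i : ℕ)) + (∑ i, (t.2.2 i : ℕ)) ≤ N ∧
                  (∑ i, (t.1 i : ℕ)) + (∑ i, (t.2.1 i : ℕ)) + (∑ i, (t.2.2 i : ℕ)) ≤ 2 * N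
              then
                C (fun i => (t.1 i : ℕ)) (fun i => (t.2.1 i : ℕ)) (fun i => (t.2.2 i : ℕ)) *
                  pdM d (fun i => (t.1 i : ℕ)) a x * (∏ i, x i ^ (t.2.1 i : ℕ)) *
                  pdM d (fun i => (t.2.2 i : ℕ)) (⇑u) x
              else 0 := by
  obtain ⟨FL, hbnd, heval⟩ := final_rep d N
  refine ⟨fun α β γ => ((FL.filter fun r => r.2 = (α, β, γ)).map (·.1)).sum, ?_⟩
  intro a hta u x
  have ha : Sm a := hta.1
  have hu : Sm (⇑u) := u.smooth ⊤
  rw [heval a (⇑u) ha hu x]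
  have hinj : Function.Injective
      (fun t : (Fin d → Fin (2 * N + 1)) × (Fin d → Fin (2 * N + 1)) ×
          (Fin d → Fin (2 * N + 1)) =>
        ((fun i => (t.1 i : ℕ)), (fun i => (t.2.1 i : ℕ)), (fun i => (t.2.2 i : ℕ)))) := by
    intro t t' h
    simp only [Prod.ext_iff] at h
    obtain ⟨h1, h2, h3⟩ := h
    rw [Prod.ext_iff, Prod.ext_iff]
    exact ⟨funext fun i => Fin.val_injective (congrFun h1 i),
      funext fun i => Fin.val_injective (congrFun h2 i),
      funext fun i => Fin.val_injective (congrFun h3 i)⟩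
  have hsurj : ∀ r ∈ FL,
      ∃ t : (Fin d → Fin (2 * N + 1)) × (Fin d → Fin (2 * N + 1)) ×
          (Fin d → Fin (2 * N + 1)),
        ((fun i => (t.1 i : ℕ)), (fun i => (t.2.1 i : ℕ)), (fun i => (t.2.2 i : ℕ))) = r.2 ∧
        ((∑ i, (t.2.1 i : ℕ)) + (∑ i, (t.2.2 i : ℕ)) ≤ N ∧
          (∑ i, (t.1 i : ℕ)) + (∑ i, (t.2.1 i : ℕ)) + (∑ i, (t.2.2 i : ℕ)) ≤ 2 * N) := by
    intro r hr
    obtain ⟨hb1, hb2⟩ := hbnd r hr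
    have hlt1 : ∀ i, r.2.1 i < 2 * N + 1 := fun i => by
      have := Finset.single_le_sum (f := r.2.1) (fun j _ => Nat.zero_le _) (Finset.mem_univ i)
      omega
    have hlt2 : ∀ i, r.2.2.1 i < 2 * N + 1 := fun i => by
      have := Finset.single_le_sum (f := r.2.2.1) (fun j _ => Nat.zero_le _) (Finset.mem_univ i)
      omega
    have hlt3 : ∀ i, r.2.2.2 i < 2 * N + 1 := fun i => by
      have := Finset.single_le_sum (f := r.2.2.2) (fun j _ => Nat.zero_le _) (Finset.mem_univ i)
      omega
    refine ⟨⟨fun i => ⟨r.2.1 i, hlt1 i⟩, fun i => ⟨r.2.2.1 i, hlt2 i⟩,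
      fun i => ⟨r.2.2.2 i, hlt3 i⟩⟩, ?_, ?_⟩
    · rw [Prod.ext_iff, Prod.ext_iff]
      exact ⟨funext fun i => rfl, funext fun i => rfl, funext fun i => rfl⟩
    · constructor
      · simpa using hb1
      · simpa using hb2
  rw [group_sum FL
    (fun r2 => pdM d r2.1 a x * ((∏ j, x j ^ r2.2.1 j) * pdM d r2.2.2 (⇑u) x))
    _ hinj _ hsurj]
  refine Finset.sum_congr rfl fun t _ => ?_
  by_cases hc : (∑ i, (t.2.1 i : ℕ)) + (∑ i, (t.2.2 i : ℕ)) ≤ N ∧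
      (∑ i, (t.1 i : ℕ)) + (∑ i, (t.2.1 i : ℕ)) + (∑ i, (t.2.2 i : ℕ)) ≤ 2 * N
  · rw [if_pos hc, if_pos hc]
    ring
  · rw [if_neg hc, if_neg hc]
end

section
/- For every real N > 2 there exists a constant C > 0, independent of q and A, such that for every q ∈ ℕ and every real A ≥ 1 one has Σ_{n=0}^{∞} (|√n − √q| + A)^{−N} ≤ C (1+√q) / A^{N−2}. -/
open Real Finset
set_option maxHeartbeats 1000000

lemma key_ineq {s x : ℝ} (hs : 1 < s) (hx : 0 < x) :
    (s - 1) * (x + 1) ^ (-s) ≤ x ^ (1 - s) - (x + 1) ^ (1 - s) := by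
  have hx1 : (0:ℝ) < x + 1 := by linarith
  have h0 : (0:ℝ) ∉ Set.uIcc x (x + 1) := by
    rw [Set.uIcc_of_le (by linarith)]
    intro h
    exact absurd (Set.mem_Icc.1 h).1 (by linarith)
  have hint : ∫ y in x..(x+1), y ^ (-s) =
      ((x + 1) ^ (-s + 1) - x ^ (-s + 1)) / (-s + 1) :=
    integral_rpow (Or.inr ⟨by intro h; linarith [neg_eq_iff_eq_neg.1 h], h0⟩)
  have hmono : (x + 1) ^ (-s) ≤ ∫ y in x..(x+1), y ^ (-s) := by
    have := intervalIntegral.integral_mono_on (f := fun _ : ℝ => (x+1) ^ (-s))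
      (g := fun y : ℝ => y ^ (-s)) (μ := MeasureTheory.volume)
      (by linarith : x ≤ x + 1)
      (intervalIntegrable_const)
      (intervalIntegral.intervalIntegrable_rpow (Or.inr h0))
      (fun y hy => Real.rpow_le_rpow_of_nonpos (lt_of_lt_of_le hx hy.1) hy.2 (by linarith))
    simpa using this
  rw [hint] at hmono
  have hne : -s + 1 < 0 := by linarith
  have h2 := (le_div_iff_of_neg hne).1 hmono
  have e : (1:ℝ) - s = -s + 1 := by ring
  rw [e]
  nlinarith [h2]

lemma core_summable {s t : ℝ} (hs : 1 < s) (ht : 1 ≤ t) :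
    Summable (fun n : ℕ => ((n : ℝ) + t) ^ (-s)) := by
  have h1 : Summable (fun n : ℕ => ((n : ℝ) + 1) ^ (-s)) := by
    have := (summable_nat_add_iff (f := fun n : ℕ => ((n : ℝ)) ^ (-s)) 1).2
      (Real.summable_nat_rpow.2 (by linarith))
    convert this using 2 with n
    push_cast
    rfl
    simp
  refine Summable.of_nonneg_of_le (fun n => Real.rpow_nonneg (by positivity) _) (fun n => ?_) h1
  exact Real.rpow_le_rpow_of_nonpos (by positivity) (by linarith) (by linarith)

lemma core_bound {s t : ℝ} (hs : 1 < s) (ht : 1 ≤ t) :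
    ∑' n : ℕ, ((n : ℝ) + t) ^ (-s) ≤ (1 + 1 / (s - 1)) * t ^ (1 - s) := by
  have ht0 : (0:ℝ) < t := by linarith
  have hsum := core_summable hs ht
  rw [Summable.tsum_eq_zero_add hsum]
  have h0 : (((0:ℕ) : ℝ) + t) ^ (-s) = t ^ (-s) := by norm_num
  rw [h0]
  have htail : ∑' n : ℕ, (((n + 1 : ℕ) : ℝ) + t) ^ (-s) ≤ t ^ (1 - s) / (s - 1) := by
    apply Real.tsum_le_of_sum_range_le (fun n => Real.rpow_nonneg (by positivity) _)
    intro K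
    have hterm : ∀ i : ℕ, (((i + 1 : ℕ) : ℝ) + t) ^ (-s) ≤
        (((i : ℝ) + t) ^ (1 - s) - (((i + 1 : ℕ) : ℝ) + t) ^ (1 - s)) / (s - 1) := by
      intro i
      have hx : (0:ℝ) < (i : ℝ) + t := by positivity
      have := key_ineq hs hx
      have e : ((i : ℝ) + t) + 1 = ((i + 1 : ℕ) : ℝ) + t := by push_cast; ring
      rw [e] at this
      rw [le_div_iff₀ (by linarith)]
      linarith
    calc ∑ i ∈ Finset.range K, (((i + 1 : ℕ) : ℝ) + t) ^ (-s)
        ≤ ∑ i ∈ Finset.range K,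
            ((((i : ℕ) : ℝ) + t) ^ (1 - s) - (((i + 1 : ℕ) : ℝ) + t) ^ (1 - s)) / (s - 1) :=
          Finset.sum_le_sum (fun i _ => hterm i)
      _ = (∑ i ∈ Finset.range K,
            ((((i : ℕ) : ℝ) + t) ^ (1 - s) - (((i + 1 : ℕ) : ℝ) + t) ^ (1 - s))) / (s - 1) := by
          rw [Finset.sum_div]
      _ = ((((0:ℕ) : ℝ) + t) ^ (1 - s) - (((K : ℕ) : ℝ) + t) ^ (1 - s)) / (s - 1) := by
          rw [Finset.sum_range_sub' (fun i => (((i : ℕ) : ℝ) + t) ^ (1 - s)) K]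
      _ ≤ t ^ (1 - s) / (s - 1) := by
          have hK : (0:ℝ) ≤ (((K : ℕ) : ℝ) + t) ^ (1 - s) :=
            Real.rpow_nonneg (by positivity) _
          have h00 : (((0:ℕ) : ℝ) + t) = t := by norm_num
          rw [h00]
          have h1 : t ^ (1 - s) - ((K : ℝ) + t) ^ (1 - s) ≤ t ^ (1 - s) := by linarith
          have h2 : (0:ℝ) ≤ s - 1 := by linarith
          gcongr
  have hts : t ^ (-s) ≤ t ^ (1 - s) :=
    Real.rpow_le_rpow_of_exponent_le ht (by linarith)
  have hpos : (0:ℝ) ≤ t ^ (1 - s) := Real.rpow_nonneg (le_of_lt ht0) _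
  have : (1 + 1 / (s - 1)) * t ^ (1 - s) = t ^ (1 - s) + t ^ (1 - s) / (s - 1) := by
    rw [add_mul, one_mul, one_div, inv_mul_eq_div]
  rw [this]
  gcongr

lemma abs_core_aux {s u : ℝ} (hs : 1 < s) (hu : 1 ≤ u) (q : ℕ) :
    ∀ n : ℕ, (|((n + (q+1) : ℕ) : ℝ) - q| + u) ^ (-s) ≤ ((n : ℝ) + u) ^ (-s) := by
  intro n
  have e : |((n + (q+1) : ℕ) : ℝ) - q| = (n : ℝ) + 1 := by
    rw [abs_of_nonneg] <;> push_cast <;> [ring; linarith [Nat.cast_nonneg (α := ℝ) n]]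
  rw [e]
  exact Real.rpow_le_rpow_of_nonpos (by positivity) (by linarith) (by linarith)

lemma abs_summable {s u : ℝ} (hs : 1 < s) (hu : 1 ≤ u) (q : ℕ) :
    Summable (fun n : ℕ => (|(n : ℝ) - q| + u) ^ (-s)) := by
  rw [← summable_nat_add_iff (f := fun n : ℕ => (|(n : ℝ) - q| + u) ^ (-s)) (q+1)]
  exact Summable.of_nonneg_of_le (fun n => Real.rpow_nonneg (by positivity) _)
    (abs_core_aux hs hu q) (core_summable hs hu)

lemma abs_bound {s u : ℝ} (hs : 1 < s) (hu : 1 ≤ u) (q : ℕ) :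
    ∑' n : ℕ, (|(n : ℝ) - q| + u) ^ (-s) ≤ 2 * ((1 + 1 / (s - 1)) * u ^ (1 - s)) := by
  have hsum := abs_summable hs hu q
  rw [← Summable.sum_add_tsum_nat_add (f := fun n : ℕ => (|(n : ℝ) - q| + u) ^ (-s)) (q+1) hsum]
  have hfin : ∑ n ∈ Finset.range (q+1), (|(n : ℝ) - q| + u) ^ (-s) ≤
      (1 + 1 / (s - 1)) * u ^ (1 - s) := by
    have e : ∀ n ∈ Finset.range (q+1),
        (|(n : ℝ) - q| + u) ^ (-s) = ((((q - n : ℕ)) : ℝ) + u) ^ (-s) := by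
      intro n hn
      have hn' : n ≤ q := Nat.lt_succ_iff.1 (Finset.mem_range.1 hn)
      have : |(n : ℝ) - q| = ((q - n : ℕ) : ℝ) := by
        rw [Nat.cast_sub hn', abs_sub_comm, abs_of_nonneg]
        have : (n:ℝ) ≤ q := Nat.cast_le.2 hn'
        linarith
      rw [this]
    rw [Finset.sum_congr rfl e]
    have hrefl : ∑ n ∈ Finset.range (q+1), ((((q - n : ℕ)) : ℝ) + u) ^ (-s) =
        ∑ n ∈ Finset.range (q+1), (((n : ℕ) : ℝ) + u) ^ (-s) := by
      have := Finset.sum_range_reflect (fun m : ℕ => (((m : ℕ) : ℝ) + u) ^ (-s)) (q+1)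
      simpa using this
    rw [hrefl]
    calc ∑ n ∈ Finset.range (q+1), (((n : ℕ) : ℝ) + u) ^ (-s)
        ≤ ∑' n : ℕ, ((n : ℝ) + u) ^ (-s) :=
          Summable.sum_le_tsum _ (fun n _ => Real.rpow_nonneg (by positivity) _) (core_summable hs hu)
      _ ≤ (1 + 1 / (s - 1)) * u ^ (1 - s) := core_bound hs hu
  have htail : ∑' n : ℕ, (|((n + (q+1) : ℕ) : ℝ) - q| + u) ^ (-s) ≤
      (1 + 1 / (s - 1)) * u ^ (1 - s) := by
    calc ∑' n : ℕ, (|((n + (q+1) : ℕ) : ℝ) - q| + u) ^ (-s)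
        ≤ ∑' n : ℕ, ((n : ℝ) + u) ^ (-s) :=
          Summable.tsum_le_tsum (abs_core_aux hs hu q) ((summable_nat_add_iff (f := fun n : ℕ => (|(n : ℝ) - q| + u) ^ (-s)) (q+1)).2 hsum)
            (core_summable hs hu)
      _ ≤ (1 + 1 / (s - 1)) * u ^ (1 - s) := core_bound hs hu
  linarith

lemma rescale {x B s : ℝ} (hx : 0 ≤ x) (hB : 0 < B) :
    (x / B) ^ (-s) = B ^ s * x ^ (-s) := by
  rw [Real.div_rpow hx hB.le, Real.rpow_neg hB.le, div_eq_mul_inv, inv_inv, mul_comm]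

lemma case1 {N A : ℝ} (hN : 0 < N) (hA : 0 < A) (q n : ℕ) (hn : n ≤ 4*q+4) :
    (|Real.sqrt n - Real.sqrt q| + A) ^ (-N) ≤
      (3*(1+Real.sqrt q)) ^ N * ((|(n:ℝ) - q| + A * (3*(1+Real.sqrt q))) ^ (-N)) := by
  set r := Real.sqrt n with hr
  set c := Real.sqrt q with hc
  have hr0 : 0 ≤ r := Real.sqrt_nonneg _
  have hc0 : 0 ≤ c := Real.sqrt_nonneg _
  have hr2 : r ^ 2 = n := Real.sq_sqrt (Nat.cast_nonneg n)
  have hc2 : c ^ 2 = q := Real.sq_sqrt (Nat.cast_nonneg q)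
  set B := 3*(1+c) with hB
  have hBpos : 0 < B := by positivity
  have hnR : (n:ℝ) ≤ 4*q+4 := by exact_mod_cast hn
  have h1 : (n:ℝ) ≤ (2*c+2)^2 := by nlinarith
  have hrle : r ≤ 2*c+2 := by
    rw [hr, show (2*c+2) = Real.sqrt ((2*c+2)^2) from (Real.sqrt_sq (by positivity)).symm]
    exact Real.sqrt_le_sqrt h1
  have hsumB : r + c ≤ B := by rw [hB]; linarith
  have habs : |(n:ℝ) - q| ≤ |r - c| * B := by
    have h2 : (r - c) * (r + c) = (n:ℝ) - q := by
      rw [← hr2, ← hc2]; ring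
    calc |(n:ℝ) - q| = |r - c| * (r + c) := by
          rw [← h2, abs_mul, abs_of_nonneg (by positivity : (0:ℝ) ≤ r + c)]
      _ ≤ |r - c| * B := mul_le_mul_of_nonneg_left hsumB (abs_nonneg _)
  have key : (|(n:ℝ) - q| + A * B) / B ≤ |r - c| + A := by
    rw [div_le_iff₀ hBpos]
    nlinarith [abs_nonneg ((n:ℝ) - q)]
  have hpos : (0:ℝ) < (|(n:ℝ) - q| + A * B) / B := by positivity
  calc (|r - c| + A) ^ (-N) ≤ ((|(n:ℝ) - q| + A * B) / B) ^ (-N) :=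
        Real.rpow_le_rpow_of_nonpos hpos key (by linarith)
    _ = B ^ N * ((|(n:ℝ) - q| + A * B) ^ (-N)) := rescale (by positivity) hBpos

lemma case2 {N A : ℝ} (hN : 0 < N) (hA : 1 ≤ A) (q n : ℕ) (hn : 4*q+4 ≤ n) :
    (|Real.sqrt n - Real.sqrt q| + A) ^ (-N) ≤
      (4:ℝ) ^ (N/2) * (((n:ℝ) + 4*A^2) ^ (-(N/2))) := by
  set r := Real.sqrt n with hr
  set c := Real.sqrt q with hc
  have hr0 : 0 ≤ r := Real.sqrt_nonneg _
  have hc0 : 0 ≤ c := Real.sqrt_nonneg _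
  have hr2 : r ^ 2 = n := Real.sq_sqrt (Nat.cast_nonneg n)
  have hA0 : (0:ℝ) < A := by linarith
  have h4q : (4*(q:ℝ)) ≤ n := by
    have : ((4*q : ℕ) : ℝ) ≤ n := by exact_mod_cast le_trans (by omega) hn
    push_cast at this; linarith
  have h2c : 2*c ≤ r := by
    have : Real.sqrt (4*q) ≤ r := Real.sqrt_le_sqrt h4q
    rwa [show (4*(q:ℝ)) = (2:ℝ)^2 * q by norm_num, Real.sqrt_mul (by positivity) _,
      Real.sqrt_sq (by norm_num : (0:ℝ) ≤ 2)] at this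
  have h1 : r/2 + A ≤ |r - c| + A := by
    rw [abs_of_nonneg (by linarith)]; linarith
  have step1 : (|r - c| + A) ^ (-N) ≤ (r/2 + A) ^ (-N) :=
    Real.rpow_le_rpow_of_nonpos (by positivity) h1 (by linarith)
  have step2 : (r/2 + A) ^ (-N) = ((r/2 + A)^2) ^ (-(N/2)) := by
    rw [← Real.rpow_natCast (r/2 + A) 2, ← Real.rpow_mul (by positivity)]
    norm_num
    congr 1
    ring
  have step3 : ((r/2 + A)^2) ^ (-(N/2)) ≤ (((n:ℝ) + 4*A^2)/4) ^ (-(N/2)) := by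
    apply Real.rpow_le_rpow_of_nonpos (by positivity)
    · nlinarith
    · linarith
  have step4 : (((n:ℝ) + 4*A^2)/4) ^ (-(N/2)) =
      (4:ℝ) ^ (N/2) * (((n:ℝ) + 4*A^2) ^ (-(N/2))) := rescale (by positivity) (by norm_num)
  calc (|r - c| + A) ^ (-N) ≤ (r/2 + A) ^ (-N) := step1
    _ = ((r/2 + A)^2) ^ (-(N/2)) := step2
    _ ≤ (((n:ℝ) + 4*A^2)/4) ^ (-(N/2)) := step3
    _ = (4:ℝ) ^ (N/2) * (((n:ℝ) + 4*A^2) ^ (-(N/2))) := step4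


/-- For `N > 2` there is `C > 0`, independent of `q ∈ ℕ` and `A ≥ 1`, such that
`Σ_n (|√n − √q| + A)^{−N} ≤ C (1+√q) / A^{N−2}`. -/
theorem sum_inv_sqrt_shift_bound (N : ℝ) (hN : 2 < N) :
    ∃ C : ℝ, 0 < C ∧
      ∀ (q : ℕ) (A : ℝ), 1 ≤ A →
        Summable (fun n : ℕ => (|Real.sqrt n - Real.sqrt q| + A) ^ (-N : ℝ)) ∧
        ∑' n : ℕ, (|Real.sqrt n - Real.sqrt q| + A) ^ (-N : ℝ) ≤
          C * (1 + Real.sqrt q) / A ^ (N - 2 : ℝ) := by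
  have hN1 : 1 < N := by linarith
  have hN2 : 1 < N/2 := by linarith
  have hc1 : 0 < 1 + 1/(N-1) := by
    have : (0:ℝ) < 1/(N-1) := div_pos one_pos (by linarith)
    linarith
  have hc2 : 0 < 1 + 1/(N/2-1) := by
    have : (0:ℝ) < 1/(N/2-1) := div_pos one_pos (by linarith)
    linarith
  refine ⟨6*(1 + 1/(N-1)) + 4*(1 + 1/(N/2-1)), by linarith, ?_⟩
  intro q A hA
  have hA0 : (0:ℝ) < A := by linarith
  have hsq0 : 0 ≤ Real.sqrt q := Real.sqrt_nonneg _
  have hBpos : (0:ℝ) < 3*(1+Real.sqrt q) := by positivity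
  have hu : (1:ℝ) ≤ A * (3*(1+Real.sqrt q)) := by nlinarith
  have ht : (1:ℝ) ≤ 4*A^2 := by nlinarith
  have hpt : ∀ n : ℕ, (|Real.sqrt n - Real.sqrt q| + A) ^ (-N) ≤
      (3*(1+Real.sqrt q)) ^ N * ((|(n:ℝ) - q| + A * (3*(1+Real.sqrt q))) ^ (-N)) +
      (4:ℝ) ^ (N/2) * (((n:ℝ) + 4*A^2) ^ (-(N/2))) := by
    intro n
    rcases le_or_gt n (4*q+4) with h | h
    · have h1 := case1 (by linarith : (0:ℝ) < N) hA0 q n h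
      have h2 : (0:ℝ) ≤ (4:ℝ) ^ (N/2) * (((n:ℝ) + 4*A^2) ^ (-(N/2))) := by positivity
      linarith
    · have h1 := case2 (by linarith : (0:ℝ) < N) hA q n h.le
      have h2 : (0:ℝ) ≤
          (3*(1+Real.sqrt q)) ^ N * ((|(n:ℝ) - q| + A * (3*(1+Real.sqrt q))) ^ (-N)) := by
        positivity
      linarith
  have hsm1 : Summable (fun n : ℕ =>
      (3*(1+Real.sqrt q)) ^ N * ((|(n:ℝ) - q| + A * (3*(1+Real.sqrt q))) ^ (-N))) :=
    (abs_summable hN1 hu q).mul_left _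
  have hsm2 : Summable (fun n : ℕ =>
      (4:ℝ) ^ (N/2) * (((n:ℝ) + 4*A^2) ^ (-(N/2)))) :=
    (core_summable hN2 ht).mul_left _
  have hsm := hsm1.add hsm2
  have hf : Summable (fun n : ℕ => (|Real.sqrt n - Real.sqrt q| + A) ^ (-N)) :=
    Summable.of_nonneg_of_le (fun n => Real.rpow_nonneg (by positivity) _) hpt hsm
  refine ⟨hf, ?_⟩
  have hb1 : ∑' n : ℕ,
      (3*(1+Real.sqrt q)) ^ N * ((|(n:ℝ) - q| + A * (3*(1+Real.sqrt q))) ^ (-N)) ≤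
      6*(1 + 1/(N-1))*(1+Real.sqrt q) * A^(2-N) := by
    rw [tsum_mul_left]
    have h1 : (3*(1+Real.sqrt q)) ^ N *
        ∑' n : ℕ, ((|(n:ℝ) - q| + A * (3*(1+Real.sqrt q))) ^ (-N)) ≤
        (3*(1+Real.sqrt q)) ^ N *
          (2 * ((1 + 1/(N-1)) * (A * (3*(1+Real.sqrt q)))^(1-N))) :=
      mul_le_mul_of_nonneg_left (abs_bound hN1 hu q) (Real.rpow_nonneg hBpos.le _)
    have e2 : (A * (3*(1+Real.sqrt q)))^(1-N) =
        A^(1-N) * (3*(1+Real.sqrt q))^(1-N) := Real.mul_rpow hA0.le hBpos.le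
    have e3 : (3*(1+Real.sqrt q)) ^ N * (3*(1+Real.sqrt q))^(1-N) = 3*(1+Real.sqrt q) := by
      rw [← Real.rpow_add hBpos]; norm_num
    have e4 : (3*(1+Real.sqrt q)) ^ N *
        (2 * ((1 + 1/(N-1)) * (A * (3*(1+Real.sqrt q)))^(1-N))) =
        6*(1 + 1/(N-1))*(1+Real.sqrt q) * A^(1-N) := by
      rw [e2]
      calc (3*(1+Real.sqrt q)) ^ N *
            (2 * ((1 + 1/(N-1)) * (A^(1-N) * (3*(1+Real.sqrt q))^(1-N))))
          = 2 * (1 + 1/(N-1)) *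
              ((3*(1+Real.sqrt q)) ^ N * (3*(1+Real.sqrt q))^(1-N)) * A^(1-N) := by ring
        _ = 6*(1 + 1/(N-1))*(1+Real.sqrt q) * A^(1-N) := by rw [e3]; ring
    rw [e4] at h1
    have h5 : A^(1-N) ≤ A^(2-N) := Real.rpow_le_rpow_of_exponent_le hA (by linarith)
    have h6 : 6*(1 + 1/(N-1))*(1+Real.sqrt q) * A^(1-N) ≤
        6*(1 + 1/(N-1))*(1+Real.sqrt q) * A^(2-N) := by
      apply mul_le_mul_of_nonneg_left h5
      positivity
    linarith
  have hb2 : ∑' n : ℕ, (4:ℝ) ^ (N/2) * (((n:ℝ) + 4*A^2) ^ (-(N/2))) ≤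
      4*(1 + 1/(N/2-1))*(1+Real.sqrt q) * A^(2-N) := by
    rw [tsum_mul_left]
    have h1 : (4:ℝ) ^ (N/2) * ∑' n : ℕ, (((n:ℝ) + 4*A^2) ^ (-(N/2))) ≤
        (4:ℝ) ^ (N/2) * ((1 + 1/(N/2-1)) * (4*A^2)^(1-N/2)) :=
      mul_le_mul_of_nonneg_left (core_bound hN2 ht) (Real.rpow_nonneg (by norm_num) _)
    have e2 : ((4*A^2 : ℝ))^(1-N/2) = (4:ℝ)^(1-N/2) * (A^2)^((1:ℝ)-N/2) :=
      Real.mul_rpow (by norm_num) (by positivity)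
    have e3 : (A^2 : ℝ)^((1:ℝ)-N/2) = A^(2-N) := by
      rw [← Real.rpow_natCast A 2, ← Real.rpow_mul hA0.le]
      norm_num
      congr 1
      ring
    have e5 : (4:ℝ)^(N/2) * (4:ℝ)^(1-N/2) = 4 := by
      rw [← Real.rpow_add (by norm_num : (0:ℝ) < 4)]; norm_num
    have e4 : (4:ℝ) ^ (N/2) * ((1 + 1/(N/2-1)) * (4*A^2)^(1-N/2)) =
        4*(1 + 1/(N/2-1))*A^(2-N) := by
      rw [e2, e3]
      calc (4:ℝ) ^ (N/2) * ((1 + 1/(N/2-1)) * ((4:ℝ)^(1-N/2) * A^(2-N)))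
          = (1 + 1/(N/2-1)) * ((4:ℝ)^(N/2) * (4:ℝ)^(1-N/2)) * A^(2-N) := by ring
        _ = 4*(1 + 1/(N/2-1))*A^(2-N) := by rw [e5]; ring
    rw [e4] at h1
    have h6 : 4*(1 + 1/(N/2-1))*A^(2-N) ≤ 4*(1 + 1/(N/2-1))*(1+Real.sqrt q)*A^(2-N) := by
      have hx : (0:ℝ) ≤ A^(2-N) := Real.rpow_nonneg hA0.le _
      nlinarith [mul_nonneg (mul_nonneg hc2.le hsq0) hx]
    linarith
  have hmain : ∑' n : ℕ, (|Real.sqrt n - Real.sqrt q| + A) ^ (-N) ≤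
      (6*(1 + 1/(N-1)) + 4*(1 + 1/(N/2-1))) * (1+Real.sqrt q) * A^(2-N) := by
    calc ∑' n : ℕ, (|Real.sqrt n - Real.sqrt q| + A) ^ (-N)
        ≤ ∑' n : ℕ,
            ((3*(1+Real.sqrt q)) ^ N * ((|(n:ℝ) - q| + A * (3*(1+Real.sqrt q))) ^ (-N)) +
             (4:ℝ) ^ (N/2) * (((n:ℝ) + 4*A^2) ^ (-(N/2)))) := Summable.tsum_le_tsum hpt hf hsm
      _ = (∑' n : ℕ,
            (3*(1+Real.sqrt q)) ^ N * ((|(n:ℝ) - q| + A * (3*(1+Real.sqrt q))) ^ (-N))) +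
          ∑' n : ℕ, (4:ℝ) ^ (N/2) * (((n:ℝ) + 4*A^2) ^ (-(N/2))) := Summable.tsum_add hsm1 hsm2
      _ ≤ 6*(1 + 1/(N-1))*(1+Real.sqrt q) * A^(2-N) +
          4*(1 + 1/(N/2-1))*(1+Real.sqrt q) * A^(2-N) := by linarith
      _ = (6*(1 + 1/(N-1)) + 4*(1 + 1/(N/2-1))) * (1+Real.sqrt q) * A^(2-N) := by ring
  have efin : (6*(1 + 1/(N-1)) + 4*(1 + 1/(N/2-1))) * (1+Real.sqrt q) * A^(2-N) =
      (6*(1 + 1/(N-1)) + 4*(1 + 1/(N/2-1))) * (1+Real.sqrt q) / A^(N-2) := by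
    rw [show (2-N : ℝ) = -(N-2) by ring, Real.rpow_neg hA0.le]
    exact (div_eq_mul_inv _ _).symm
  rw [efin] at hmain
  exact hmain
end
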